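/- Let D be a triangle in ℝ² with the origin in its interior, F its gauge, and F_{a,a} = (F_a)_a the twice-associated gauge. Then the unit disk of F_{a,a} is −D, the reflection of D through the origin; equivalently F_{a,a}(x) = F(−x). -/

import Mathlib

open Pointwise

noncomputable section

/-- The determinant form `[x,y] = x₁y₂ − x₂y₁`. -/
def det2 (x y : ℝ × ℝ) : ℝ := x.1 * y.2 - x.2 * y.1

/-- A gauge (convex distance function) on ℝ². -/
def IsGauge (F : ℝ × ℝ → ℝ) : Prop :=
  (∀ x, 0 ≤ F x) ∧ (∀ x, F x = 0 ↔ x = 0) ∧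
  (∀ (l : ℝ) (x : ℝ × ℝ), 0 < l → F (l • x) = l * F x) ∧
  (∀ x y, F (x + y) ≤ F x + F y)

/-- The associated gauge `F_a(x) = sup {[y,x] : F(y) = 1}`. -/
def assocGauge (F : ℝ × ℝ → ℝ) (x : ℝ × ℝ) : ℝ :=
  sSup {d : ℝ | ∃ y, F y = 1 ∧ d = det2 y x}

/-- The gauge (Minkowski functional) of a convex body `D` with `0` in its interior. -/
def gaugeOf (D : Set (ℝ × ℝ)) (x : ℝ × ℝ) : ℝ := sInf {l : ℝ | 0 < l ∧ x ∈ l • D}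

namespace TriangleAux

lemma det2_smul_left (l : ℝ) (y x : ℝ × ℝ) : det2 (l • y) x = l * det2 y x := by
  simp [det2]; ring

lemma det2_smul_right (l : ℝ) (y x : ℝ × ℝ) : det2 y (l • x) = l * det2 y x := by
  simp [det2]; ring

lemma det2_neg_swap (y x : ℝ × ℝ) : det2 y x = det2 (-x) y := by
  simp [det2]; ring

lemma det2_zero_left (x : ℝ × ℝ) : det2 0 x = 0 := by simp [det2]

lemma sq_sum_pos {x : ℝ × ℝ} (hx : x ≠ 0) : 0 < x.1 ^ 2 + x.2 ^ 2 := by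
  rcases eq_or_ne x.1 0 with h1 | h1
  · have h2 : x.2 ≠ 0 := by
      intro h2; exact hx (Prod.ext h1 h2)
    have := pow_pos (abs_pos.mpr h2) 2
    nlinarith [sq_nonneg x.1, sq_abs x.2]
  · nlinarith [sq_nonneg x.2, pow_pos (abs_pos.mpr h1) 2, sq_abs x.1]

/-- The sup of `det2 y x` over the unit sphere of a gauge-like function equals the
sup over the unit ball. -/
lemma sSup_sphere_eq (G : ℝ × ℝ → ℝ)
    (hnn : ∀ y, 0 ≤ G y) (hz : ∀ y, G y = 0 ↔ y = 0)
    (hhom : ∀ (l : ℝ) (y : ℝ × ℝ), 0 < l → G (l • y) = l * G y) (x : ℝ × ℝ)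
    (hbdd : BddAbove {d : ℝ | ∃ y, G y ≤ 1 ∧ d = det2 y x}) :
    sSup {d : ℝ | ∃ y, G y = 1 ∧ d = det2 y x}
      = sSup {d : ℝ | ∃ y, G y ≤ 1 ∧ d = det2 y x} := by
  set S := {d : ℝ | ∃ y, G y = 1 ∧ d = det2 y x} with hS
  set T := {d : ℝ | ∃ y, G y ≤ 1 ∧ d = det2 y x} with hT
  -- normalization: any nonzero vector can be scaled to the sphere
  have hnorm : ∀ y : ℝ × ℝ, y ≠ 0 → ∃ w, G w = 1 ∧ det2 w x = (G y)⁻¹ * det2 y x := by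
    intro y hy
    have hGy : 0 < G y := lt_of_le_of_ne (hnn y) (fun h => hy ((hz y).mp h.symm))
    refine ⟨(G y)⁻¹ • y, ?_, det2_smul_left _ _ _⟩
    rw [hhom _ _ (inv_pos.mpr hGy), inv_mul_cancel₀ hGy.ne']
  -- a point on the sphere with nonnegative value
  have hpos : ∃ w, G w = 1 ∧ 0 ≤ det2 w x := by
    rcases eq_or_ne x 0 with rfl | hx
    · obtain ⟨w, hw, hwd⟩ := hnorm (1, 0) (by simp [Prod.ext_iff])
      exact ⟨w, hw, by simp [det2] at hwd ⊢⟩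
    · have hR : ((x.2, -x.1) : ℝ × ℝ) ≠ 0 := by
        intro h
        rw [Prod.ext_iff] at h
        simp only [Prod.fst_zero, Prod.snd_zero, neg_eq_zero] at h
        exact hx (Prod.ext h.2 h.1)
      obtain ⟨w, hw, hwd⟩ := hnorm (x.2, -x.1) hR
      refine ⟨w, hw, ?_⟩
      rw [hwd]
      have h1 : det2 (x.2, -x.1) x = x.1 ^ 2 + x.2 ^ 2 := by simp [det2]; ring
      have hGy : 0 < G (x.2, -x.1) :=
        lt_of_le_of_ne (hnn _) (fun h => hR ((hz _).mp h.symm))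
      have h2 := sq_sum_pos hx
      rw [h1]
      positivity
  obtain ⟨w₀, hw₀, hw₀d⟩ := hpos
  have hSne : S.Nonempty := ⟨det2 w₀ x, w₀, hw₀, rfl⟩
  have hTne : T.Nonempty := ⟨0, 0, by rw [(hz 0).mpr rfl]; norm_num, (det2_zero_left x).symm⟩
  have hST : S ⊆ T := fun d ⟨y, hy, hd⟩ => ⟨y, hy.le, hd⟩
  have hSbdd : BddAbove S := hbdd.mono hST
  refine le_antisymm (csSup_le_csSup hbdd hSne hST) (csSup_le hTne ?_)
  rintro d ⟨y, hy, rfl⟩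
  rcases le_or_gt (det2 y x) 0 with hle | hlt
  · exact hle.trans (hw₀d.trans (le_csSup hSbdd ⟨w₀, hw₀, rfl⟩))
  · have hy0 : y ≠ 0 := fun h => by simp [h, det2_zero_left] at hlt
    have hGy : 0 < G y := lt_of_le_of_ne (hnn y) (fun h => hy0 ((hz y).mp h.symm))
    obtain ⟨w, hw, hwd⟩ := hnorm y hy0
    have h1 : det2 y x ≤ det2 w x := by
      rw [hwd]
      have hinv : (1:ℝ) ≤ (G y)⁻¹ := (one_le_inv₀ hGy).mpr hy
      nlinarith
    exact h1.trans (le_csSup hSbdd ⟨w, hw, rfl⟩)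

end TriangleAux

theorem triangle_assoc_assoc_unit_disk (p q r : ℝ × ℝ)
    (h0 : (0 : ℝ × ℝ) ∈ interior (convexHull ℝ {p, q, r})) :
    {x : ℝ × ℝ | assocGauge (assocGauge (gaugeOf (convexHull ℝ {p, q, r}))) x ≤ 1} =
        -(convexHull ℝ {p, q, r} : Set (ℝ × ℝ)) ∧
    ∀ x : ℝ × ℝ, assocGauge (assocGauge (gaugeOf (convexHull ℝ {p, q, r}))) x =
        gaugeOf (convexHull ℝ {p, q, r}) (-x) := by
  classical
  open TriangleAux in
  set D : Set (ℝ × ℝ) := convexHull ℝ {p, q, r} with hD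
  have hgo : gaugeOf D = gauge D := rfl
  have hfin : ({p, q, r} : Set (ℝ × ℝ)).Finite := Set.toFinite _
  have hcomp : IsCompact D := hfin.isCompact_convexHull (𝕜 := ℝ)
  have hcl : IsClosed D := hcomp.isClosed
  have hconv : Convex ℝ D := convex_convexHull ℝ _
  have hnhds : D ∈ nhds (0 : ℝ × ℝ) := mem_interior_iff_mem_nhds.mp h0
  have habs : Absorbent ℝ D := absorbent_nhds_zero hnhds
  have hD0 : (0 : ℝ × ℝ) ∈ D := interior_subset h0
  have hvnb : Bornology.IsVonNBounded ℝ D := by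
    rw [NormedSpace.isVonNBounded_iff]; exact hcomp.isBounded
  have hmem : ∀ y : ℝ × ℝ, gauge D y ≤ 1 ↔ y ∈ D := by
    intro y
    rw [gauge_le_one_iff_mem_closure hconv hnhds, hcl.closure_eq]
  have hpD : p ∈ D := subset_convexHull ℝ _ (by simp)
  have hqD : q ∈ D := subset_convexHull ℝ _ (by simp)
  have hrD : r ∈ D := subset_convexHull ℝ _ (by simp)
  have hzG : ∀ y : ℝ × ℝ, gauge D y = 0 ↔ y = 0 := fun y => gauge_eq_zero habs hvnb
  have hhomG : ∀ (l : ℝ) (y : ℝ × ℝ), 0 < l → gauge D (l • y) = l * gauge D y := by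
    intro l y hl
    rw [gauge_smul_of_nonneg hl.le, smul_eq_mul]
  -- the explicit max function
  set h : (ℝ × ℝ) → ℝ := fun x => max (det2 p x) (max (det2 q x) (det2 r x)) with hh
  -- bound of det2 over D
  have hDle : ∀ x : ℝ × ℝ, ∀ y ∈ D, det2 y x ≤ h x := by
    intro x y hy
    have hlin : IsLinearMap ℝ (fun y : ℝ × ℝ => det2 y x) := by
      constructor
      · intro a b; simp [det2]; ring
      · intro c a; simp [det2]; ring
    have hcv : Convex ℝ {y : ℝ × ℝ | det2 y x ≤ h x} := convex_halfSpace_le hlin _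
    have hsub : ({p, q, r} : Set (ℝ × ℝ)) ⊆ {y : ℝ × ℝ | det2 y x ≤ h x} := by
      intro v hv
      simp only [Set.mem_insert_iff, Set.mem_singleton_iff] at hv
      simp only [Set.mem_setOf_eq]
      rcases hv with rfl | rfl | rfl
      · exact le_max_left _ _
      · exact le_trans (le_max_left _ _) (le_max_right _ _)
      · exact le_trans (le_max_right _ _) (le_max_right _ _)
    exact convexHull_min hsub hcv hy
  -- h is positive away from 0
  have hhpos : ∀ x : ℝ × ℝ, x ≠ 0 → 0 < h x := by
    intro x hx
    obtain ⟨ε, hε, hball⟩ := Metric.mem_nhds_iff.mp hnhds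
    set v : ℝ × ℝ := (x.2, -x.1) with hv
    have hvne : v ≠ 0 := by
      intro hcon
      rw [Prod.ext_iff] at hcon
      simp only [Prod.fst_zero, Prod.snd_zero, neg_eq_zero] at hcon
      exact hx (Prod.ext (by simpa [hv] using hcon.2) (by simpa [hv] using hcon.1))
    have hvnorm : 0 < ‖v‖ := norm_pos_iff.mpr hvne
    set c : ℝ := ε / (2 * ‖v‖) with hc
    have hcpos : 0 < c := by positivity
    have hwD : c • v ∈ D := by
      apply hball
      rw [Metric.mem_ball, dist_zero_right, norm_smul, Real.norm_eq_abs, abs_of_pos hcpos]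
      have heq : c * ‖v‖ = ε / 2 := by
        rw [hc]; field_simp
      rw [heq]; linarith
    have hv1 : det2 v x = x.1 ^ 2 + x.2 ^ 2 := by
      show det2 (x.2, -x.1) x = _
      simp [det2]; ring
    have h1 : det2 (c • v) x = c * (x.1 ^ 2 + x.2 ^ 2) := by
      rw [det2_smul_left, hv1]
    have h2 := sq_sum_pos hx
    have h3 : 0 < det2 (c • v) x := by rw [h1]; positivity
    exact lt_of_lt_of_le h3 (hDle x _ hwD)
  have hh0 : h 0 = 0 := by simp [hh, det2]
  have hhz : ∀ x : ℝ × ℝ, h x = 0 ↔ x = 0 := by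
    intro x
    constructor
    · intro hx
      by_contra hne
      exact (hhpos x hne).ne' hx
    · rintro rfl; exact hh0
  have hhnn : ∀ x : ℝ × ℝ, 0 ≤ h x := by
    intro x
    rcases eq_or_ne x 0 with rfl | hx
    · exact hh0.ge
    · exact (hhpos x hx).le
  have hhhom : ∀ (l : ℝ) (x : ℝ × ℝ), 0 < l → h (l • x) = l * h x := by
    intro l x hl
    simp only [hh, det2_smul_right]
    rw [mul_max_of_nonneg _ _ hl.le, mul_max_of_nonneg _ _ hl.le]
  -- Step A : assocGauge (gauge D) = h
  have hballBdd : ∀ x : ℝ × ℝ, BddAbove {d : ℝ | ∃ y, gauge D y ≤ 1 ∧ d = det2 y x} := by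
    intro x
    refine ⟨h x, ?_⟩
    rintro d ⟨y, hy, rfl⟩
    exact hDle x y ((hmem y).mp hy)
  have hA : ∀ x : ℝ × ℝ, assocGauge (gauge D) x = h x := by
    intro x
    rw [assocGauge, sSup_sphere_eq (gauge D) (fun y => gauge_nonneg y) hzG hhomG x (hballBdd x)]
    have hne : {d : ℝ | ∃ y, gauge D y ≤ 1 ∧ d = det2 y x}.Nonempty :=
      ⟨0, 0, by rw [gauge_zero]; norm_num, (det2_zero_left x).symm⟩
    apply le_antisymm
    · apply csSup_le hne
      rintro d ⟨y, hy, rfl⟩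
      exact hDle x y ((hmem y).mp hy)
    · refine max_le (le_csSup (hballBdd x) ⟨p, (hmem p).mpr hpD, rfl⟩) (max_le ?_ ?_)
      · exact le_csSup (hballBdd x) ⟨q, (hmem q).mpr hqD, rfl⟩
      · exact le_csSup (hballBdd x) ⟨r, (hmem r).mpr hrD, rfl⟩
  -- the "polar" bound : if h y ≤ 1 then det2 y x ≤ gauge D (-x)
  have hpolar : ∀ x y : ℝ × ℝ, h y ≤ 1 → det2 y x ≤ gauge D (-x) := by
    intro x y hy
    refine le_csInf habs.gauge_set_nonempty ?_
    rintro l ⟨hl, hxl⟩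
    obtain ⟨d, hd, hdx⟩ := hxl
    have hdx' : l • d = -x := hdx
    have h1 : det2 d y ≤ 1 := le_trans (hDle y d hd) hy
    calc det2 y x = det2 (-x) y := det2_neg_swap y x
      _ = det2 (l • d) y := by rw [hdx']
      _ = l * det2 d y := det2_smul_left l d y
      _ ≤ l * 1 := by nlinarith
      _ = l := mul_one l
  have hTbdd : ∀ x : ℝ × ℝ, BddAbove {d : ℝ | ∃ y, h y ≤ 1 ∧ d = det2 y x} := by
    intro x
    exact ⟨gauge D (-x), by rintro d ⟨y, hy, rfl⟩; exact hpolar x y hy⟩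
  -- Step B : assocGauge h = gauge D ∘ neg
  have hB : ∀ x : ℝ × ℝ, assocGauge h x = gauge D (-x) := by
    intro x
    rw [assocGauge, sSup_sphere_eq h hhnn hhz hhhom x (hTbdd x)]
    set T := {d : ℝ | ∃ y, h y ≤ 1 ∧ d = det2 y x} with hT
    have hTne : T.Nonempty := ⟨0, 0, by rw [hh0]; norm_num, (det2_zero_left x).symm⟩
    refine le_antisymm (csSup_le hTne ?_) ?_
    · rintro d ⟨y, hy, rfl⟩
      exact hpolar x y hy
    · set c := sSup T with hc
      have hc0 : (0 : ℝ) ≤ c := by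
        refine le_csSup (hTbdd x) ⟨0, by rw [hh0]; norm_num, (det2_zero_left x).symm⟩
      by_contra hcon
      push_neg at hcon
      set t := (c + gauge D (-x)) / 2 with ht
      have hct : c < t := by rw [ht]; linarith
      have htg : t < gauge D (-x) := by rw [ht]; linarith
      have ht0 : 0 < t := lt_of_le_of_lt hc0 hct
      have hnotmem : -x ∉ t • D := by
        intro hmem'
        exact absurd (gauge_le_of_mem ht0.le hmem') (not_le.mpr htg)
      set z : ℝ × ℝ := t⁻¹ • (-x) with hz'
      have hzD : z ∉ D := by
        intro hzD
        exact hnotmem (by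
          rw [Set.mem_smul_set_iff_inv_smul_mem₀ ht0.ne']
          exact hzD)
      obtain ⟨f, u, hfD, hfz⟩ := geometric_hahn_banach_closed_point hconv hcl hzD
      have hu : 0 < u := by
        have := hfD 0 hD0
        simpa using this
      set w : ℝ × ℝ := (-(f (0, 1)) / u, f (1, 0) / u) with hw
      have hfeval : ∀ d : ℝ × ℝ, f d = d.1 * f (1, 0) + d.2 * f (0, 1) := by
        intro d
        have hd : d = d.1 • ((1 : ℝ), (0 : ℝ)) + d.2 • ((0 : ℝ), (1 : ℝ)) := by
          simp [Prod.ext_iff]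
        conv_lhs => rw [hd]
        rw [map_add, map_smul, map_smul]
        simp [smul_eq_mul]
      have hdet : ∀ d : ℝ × ℝ, det2 d w = f d / u := by
        intro d
        show det2 d (-(f (0, 1)) / u, f (1, 0) / u) = f d / u
        rw [hfeval d, det2]
        field_simp
        ring
      have hwE : h w ≤ 1 := by
        have hb : ∀ v ∈ D, det2 v w ≤ 1 := by
          intro v hv
          rw [hdet v]
          exact (div_le_one hu).mpr (hfD v hv).le
        exact max_le (hb p hpD) (max_le (hb q hqD) (hb r hrD))
      have hwT : det2 w x ∈ T := ⟨w, hwE, rfl⟩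
      have hle : det2 w x ≤ c := le_csSup (hTbdd x) hwT
      have hgt : t < det2 w x := by
        have h1 : det2 w x = t * (f z / u) := by
          rw [det2_neg_swap w x]
          have hxz : -x = t • z := by
            rw [hz', smul_smul, mul_inv_cancel₀ ht0.ne', one_smul]
          rw [hxz, det2_smul_left, hdet z]
        rw [h1]
        have h2 : 1 < f z / u := (one_lt_div hu).mpr hfz
        nlinarith
      linarith
  -- assemble
  have hmain : ∀ x : ℝ × ℝ,
      assocGauge (assocGauge (gaugeOf D)) x = gaugeOf D (-x) := by
    intro x
    rw [hgo]
    have : assocGauge (gauge D) = h := funext hA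
    rw [this]
    exact hB x
  refine ⟨?_, hmain⟩
  ext x
  rw [Set.mem_setOf_eq, hmain x, Set.mem_neg, hgo]
  exact hmem (-x)
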